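/- arXiv:2101.00681 — 3 statements merged into one kernel-verified Lean document; each statement's English description precedes it below -/
import Mathlib

section
/- At the single-species equilibrium (1, 0, 0) of the three-species segregation kinetics, the Jacobian matrix (the matrix of partial derivatives ∂Fᵢ/∂mⱼ) equals !![−1, −3, −3; 0, −2, 0; 0, 0, −2], and its characteristic polynomial equals (X + 1)(X + 2)²; in particular all eigenvalues are negative real numbers. -/
open Polynomial

/-- At the single-species equilibrium (1,0,0) of the three-species segregation kinetics
(a_{ii} = 1, a_{ij} = 3 for i ≠ j), the Jacobian matrix of partial derivatives equals
!![−1, −3, −3; 0, −2, 0; 0, 0, −2], its characteristic polynomial is (X + 1)(X + 2)²,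
and all (real) eigenvalues are negative. -/
theorem segregation_jacobian_single_species_equilibrium
    (a : Fin 3 → Fin 3 → ℝ) (ha : ∀ i j, a i j = if i = j then 1 else 3)
    (F : Fin 3 → (Fin 3 → ℝ) → ℝ)
    (hF : ∀ i m, F i m = m i * (1 - ∑ j, a i j * m j))
    (m₀ : Fin 3 → ℝ) (hm₀ : m₀ = ![1, 0, 0])
    (J : Matrix (Fin 3) (Fin 3) ℝ)
    (hJ : ∀ i j, J i j = fderiv ℝ (F i) m₀ (Pi.single j 1)) :
    J = !![-1, -3, -3; 0, -2, 0; 0, 0, -2] ∧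
    J.charpoly = (X + 1) * (X + 2) ^ 2 ∧
    ∀ μ : ℝ, μ ∈ spectrum ℝ J → μ < 0 := by
  have hJeq : J = !![-1, -3, -3; 0, -2, 0; 0, 0, -2] := by
    -- compute the derivative
    have key : ∀ i j : Fin 3, J i j
        = (1 - ∑ k, a i k * m₀ k) * (if i = j then 1 else 0) + m₀ i * (-(a i j)) := by
      intro i j
      have hS : HasFDerivAt (fun m : Fin 3 → ℝ => ∑ k, a i k * m k)
          (∑ k, a i k • (ContinuousLinearMap.proj k : (Fin 3 → ℝ) →L[ℝ] ℝ)) m₀ := by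
        have := (∑ k, a i k • (ContinuousLinearMap.proj k :
            (Fin 3 → ℝ) →L[ℝ] ℝ)).hasFDerivAt (x := m₀)
        convert this using 1
        funext m
        simp [ContinuousLinearMap.sum_apply]
      have hproj : HasFDerivAt (fun m : Fin 3 → ℝ => m i)
          (ContinuousLinearMap.proj i : (Fin 3 → ℝ) →L[ℝ] ℝ) m₀ :=
        hasFDerivAt_apply i m₀
      have hsub : HasFDerivAt (fun m : Fin 3 → ℝ => 1 - ∑ k, a i k * m k)
          (-(∑ k, a i k • (ContinuousLinearMap.proj k : (Fin 3 → ℝ) →L[ℝ] ℝ))) m₀ :=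
        hS.const_sub 1
      have hmul := hproj.mul hsub
      have hFi : HasFDerivAt (F i)
          (m₀ i • (-(∑ k, a i k • (ContinuousLinearMap.proj k : (Fin 3 → ℝ) →L[ℝ] ℝ)))
            + (1 - ∑ k, a i k * m₀ k) • (ContinuousLinearMap.proj i :
              (Fin 3 → ℝ) →L[ℝ] ℝ)) m₀ := by
        have hfun : F i = fun m => m i * (1 - ∑ k, a i k * m k) := funext (hF i)
        rw [hfun]
        exact hmul
      rw [hJ i j, hFi.fderiv]
      simp [ContinuousLinearMap.sum_apply, Pi.single_apply, Finset.mul_sum, mul_ite]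
      ring
    ext i j
    rw [key i j]
    subst hm₀
    fin_cases i <;> fin_cases j <;>
      simp [ha, Fin.sum_univ_three, Matrix.vecHead, Matrix.vecTail] <;> norm_num
  refine ⟨hJeq, ?_, ?_⟩
  · rw [hJeq, Matrix.charpoly, Matrix.det_fin_three]
    simp [Matrix.charmatrix_apply, Matrix.diagonal_apply, Matrix.vecHead, Matrix.vecTail,
      map_ofNat]
    ring
  · intro μ hμ
    rw [spectrum.mem_iff] at hμ
    have hdet : (algebraMap ℝ (Matrix (Fin 3) (Fin 3) ℝ) μ - J).det = (μ + 1) * (μ + 2) ^ 2 := by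
      rw [hJeq]
      rw [Matrix.det_fin_three]
      simp [Matrix.algebraMap_eq_diagonal, Matrix.diagonal_apply, Matrix.vecHead, Matrix.vecTail]
      ring
    by_contra hlt
    push_neg at hlt
    exact hμ ((Matrix.isUnit_iff_isUnit_det _).mpr (isUnit_iff_ne_zero.mpr
      (by rw [hdet]; positivity)))
end

section
/- At the coexistence equilibrium (1/7, 1/7, 1/7) of the three-species segregation kinetics, the Jacobian matrix equals the 3×3 matrix with diagonal entries −1/7 and off-diagonal entries −3/7, its characteristic polynomial equals (X + 1)(X − 2/7)², and in particular 2/7 is a positive eigenvalue, so this equilibrium is not linearly stable. -/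
open Polynomial

lemma segDeriv (c : Fin 3 → ℝ) (i : Fin 3) (m₀ : Fin 3 → ℝ) :
    HasFDerivAt (fun m : Fin 3 → ℝ => m i * (1 - ∑ j, c j * m j))
      (m₀ i • (- ∑ j, c j • (ContinuousLinearMap.proj j : (Fin 3 → ℝ) →L[ℝ] ℝ)) +
        (1 - ∑ j, c j * m₀ j) • (ContinuousLinearMap.proj i : (Fin 3 → ℝ) →L[ℝ] ℝ)) m₀ := by
  have h1 : HasFDerivAt (fun m : Fin 3 → ℝ => m i)
      (ContinuousLinearMap.proj i : (Fin 3 → ℝ) →L[ℝ] ℝ) m₀ :=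
    hasFDerivAt_apply i m₀
  have hs : HasFDerivAt (fun m : Fin 3 → ℝ => ∑ j, c j * m j)
      (∑ j, c j • (ContinuousLinearMap.proj j : (Fin 3 → ℝ) →L[ℝ] ℝ)) m₀ :=
    HasFDerivAt.fun_sum fun j _ =>
      (by simpa using ((ContinuousLinearMap.proj j : (Fin 3 → ℝ) →L[ℝ] ℝ).hasFDerivAt : HasFDerivAt (fun m : Fin 3 → ℝ => m j) _ m₀).const_mul (c j))
  have h2 : HasFDerivAt (fun m : Fin 3 → ℝ => 1 - ∑ j, c j * m j)
      (- ∑ j, c j • (ContinuousLinearMap.proj j : (Fin 3 → ℝ) →L[ℝ] ℝ)) m₀ := by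
    simpa using (hasFDerivAt_const (1:ℝ) m₀).fun_sub hs
  exact h1.mul h2


/-- At the coexistence equilibrium (1/7, 1/7, 1/7) of the three-species segregation
kinetics (a_{ii} = 1, a_{ij} = 3 for i ≠ j), the Jacobian has diagonal entries −1/7 and
off-diagonal entries −3/7, its characteristic polynomial is (X + 1)(X − 2/7)², and 2/7
is a positive eigenvalue, so the equilibrium is not linearly stable. -/
theorem segregation_jacobian_coexistence_equilibrium
    (a : Fin 3 → Fin 3 → ℝ) (ha : ∀ i j, a i j = if i = j then 1 else 3)
    (F : Fin 3 → (Fin 3 → ℝ) → ℝ)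
    (hF : ∀ i m, F i m = m i * (1 - ∑ j, a i j * m j))
    (m₀ : Fin 3 → ℝ) (hm₀ : m₀ = ![1/7, 1/7, 1/7])
    (J : Matrix (Fin 3) (Fin 3) ℝ)
    (hJ : ∀ i j, J i j = fderiv ℝ (F i) m₀ (Pi.single j 1)) :
    (∀ i j, J i j = if i = j then -1/7 else -3/7) ∧
    J.charpoly = (X + 1) * (X - C (2/7)) ^ 2 ∧
    (2/7 : ℝ) ∈ spectrum ℝ J ∧ (0 : ℝ) < 2/7 := by
  have hsum : ∀ i : Fin 3, ∑ j, a i j * m₀ j = 1 := by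
    intro i
    subst hm₀
    fin_cases i <;> simp [Fin.sum_univ_three, ha] <;> norm_num
  have hE : ∀ i j, J i j = -(1/7) * a i j := by
    intro i j
    have hd := segDeriv (a i) i m₀
    have hfe : F i = fun m : Fin 3 → ℝ => m i * (1 - ∑ j, a i j * m j) := by
      funext m; exact hF i m
    rw [hJ i j, hfe, hd.fderiv]
    have hm : m₀ i = 1/7 := by subst hm₀; fin_cases i <;> norm_num
    simp [hsum i, hm, ContinuousLinearMap.sum_apply, Pi.single_apply, Finset.mul_sum]
  have hEntries : ∀ i j, J i j = if i = j then -1/7 else -3/7 := by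
    intro i j
    rw [hE i j, ha i j]
    split <;> norm_num
  have hM : J = Matrix.of fun i j : Fin 3 => if i = j then (-1/7 : ℝ) else -3/7 := by
    ext i j; exact hEntries i j
  refine ⟨hEntries, ?_, ?_, by norm_num⟩
  · rw [hM]
    apply Polynomial.funext
    intro x
    simp [Matrix.charpoly, Matrix.det_fin_three, Matrix.charmatrix_apply,
      Matrix.one_apply, Matrix.of_apply]
    ring
  · rw [spectrum.mem_iff, hM]
    intro h
    rw [Matrix.isUnit_iff_isUnit_det] at h
    rw [Matrix.det_fin_three] at h
    simp [Matrix.algebraMap_matrix_apply, Matrix.sub_apply, Matrix.of_apply] at h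
    norm_num at h
end

section
/- At the two-species equilibrium (1/4, 1/4, 0) of the three-species segregation kinetics, the Jacobian matrix equals !![−1/4, −3/4, −3/4; −3/4, −1/4, −3/4; 0, 0, −1/2], its characteristic polynomial equals (X + 1)(X + 1/2)(X − 1/2), and in particular 1/2 is a positive eigenvalue, so this equilibrium is not linearly stable. -/
open Polynomial

/-- At the two-species equilibrium (1/4, 1/4, 0) of the three-species segregation
kinetics (a_{ii} = 1, a_{ij} = 3 for i ≠ j), the Jacobian equals
!![−1/4, −3/4, −3/4; −3/4, −1/4, −3/4; 0, 0, −1/2], its characteristic polynomial is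
(X + 1)(X + 1/2)(X − 1/2), and 1/2 is a positive eigenvalue, so the equilibrium is not
linearly stable. -/
theorem segregation_jacobian_two_species_equilibrium
    (a : Fin 3 → Fin 3 → ℝ) (ha : ∀ i j, a i j = if i = j then 1 else 3)
    (F : Fin 3 → (Fin 3 → ℝ) → ℝ)
    (hF : ∀ i m, F i m = m i * (1 - ∑ j, a i j * m j))
    (m₀ : Fin 3 → ℝ) (hm₀ : m₀ = ![1/4, 1/4, 0])
    (J : Matrix (Fin 3) (Fin 3) ℝ)
    (hJ : ∀ i j, J i j = fderiv ℝ (F i) m₀ (Pi.single j 1)) :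
    J = !![-1/4, -3/4, -3/4; -3/4, -1/4, -3/4; 0, 0, -1/2] ∧
    J.charpoly = (X + 1) * (X + C (1/2)) * (X - C (1/2)) ∧
    (1/2 : ℝ) ∈ spectrum ℝ J ∧ (0 : ℝ) < 1/2 := by
  have key : ∀ i j : Fin 3, fderiv ℝ (F i) m₀ (Pi.single j 1) =
      (Pi.single j 1 : Fin 3 → ℝ) i * (1 - ∑ k, a i k * m₀ k)
        + m₀ i * (0 - ∑ k, a i k * (Pi.single j 1 : Fin 3 → ℝ) k) := by
    intro i j
    have hlin : HasFDerivAt (fun m : Fin 3 → ℝ => ∑ k, a i k * m k)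
        (∑ k : Fin 3, a i k • (ContinuousLinearMap.proj k :
          (Fin 3 → ℝ) →L[ℝ] ℝ)) m₀ := by
      apply HasFDerivAt.fun_sum
      intro k _
      exact ((ContinuousLinearMap.proj k :
        (Fin 3 → ℝ) →L[ℝ] ℝ).hasFDerivAt.const_mul (a i k))
    have hprod : HasFDerivAt (fun m : Fin 3 → ℝ => m i * (1 - ∑ k, a i k * m k))
        (m₀ i • ((0 : (Fin 3 → ℝ) →L[ℝ] ℝ) - ∑ k : Fin 3, a i k •
            (ContinuousLinearMap.proj k : (Fin 3 → ℝ) →L[ℝ] ℝ))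
          + (1 - ∑ k, a i k * m₀ k) • (ContinuousLinearMap.proj i :
            (Fin 3 → ℝ) →L[ℝ] ℝ)) m₀ :=
      ((ContinuousLinearMap.proj i :
        (Fin 3 → ℝ) →L[ℝ] ℝ).hasFDerivAt).mul ((hasFDerivAt_const 1 m₀).sub hlin)
    have hFe : F i = fun m : Fin 3 → ℝ => m i * (1 - ∑ k, a i k * m k) :=
      funext fun m => hF i m
    rw [hFe, hprod.fderiv]
    simp [smul_eq_mul]
    ring
  have hJval : J = !![-1/4, -3/4, -3/4; -3/4, -1/4, -3/4; 0, 0, -1/2] := by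
    ext i j
    rw [hJ, key]
    fin_cases i <;> fin_cases j <;>
      simp [ha, hm₀, Fin.sum_univ_three, Pi.single_apply] <;> norm_num
  refine ⟨hJval, ?_, ?_, by norm_num⟩
  · rw [hJval, Matrix.charpoly, Matrix.det_fin_three]
    apply Polynomial.funext
    intro x
    simp [Matrix.charmatrix_apply, Matrix.diagonal_apply]
    ring
  · rw [spectrum.mem_iff]
    intro h
    rw [Matrix.isUnit_iff_isUnit_det] at h
    have : ((algebraMap ℝ (Matrix (Fin 3) (Fin 3) ℝ)) (1/2) - J).det = 0 := by
      rw [hJval]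
      rw [Matrix.algebraMap_eq_diagonal]
      rw [Matrix.det_fin_three]
      norm_num [Matrix.diagonal_apply, Fin.ext_iff]
      simp [Matrix.vecHead, Matrix.vecTail]
    rw [this] at h
    exact h.ne_zero rfl
end
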